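/- Let a ∈ ℝᵐ, ρ > 0 with ‖a‖₂² > ρ, X ⪰ 0 an m×m matrix with Tr X = 1 and aᵀXa > ρ, and set B(X) = X^{1/2}(aaᵀ − ρI)X^{1/2}. Then B(X) has exactly one positive eigenvalue α, and α ≤ aᵀXa. Moreover the sum of the absolute values of the negative eigenvalues of B(X) equals α − (aᵀXa − ρ), which is at most ρ. -/

import Mathlib

open Matrix
open scoped BigOperators
open scoped MatrixOrder

/-- for `a ∈ ℝᵐ`, `0 < ρ < ‖a‖₂²`, `X ⪰ 0` with `Tr X = 1` and
`aᵀXa > ρ`, the matrix `B(X) = X^{1/2}(aaᵀ − ρI)X^{1/2}` has exactly one positive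
eigenvalue `α`, with `α ≤ aᵀXa`, and the sum of the absolute values of its negative
eigenvalues equals `α − (aᵀXa − ρ)`, which is at most `ρ`. -/
theorem stmt15 {m : ℕ} (a : Fin m → ℝ) (ρ : ℝ) (hρ0 : 0 < ρ)
    (hρ1 : ρ < ∑ j, a j ^ 2)
    (X : Matrix (Fin m) (Fin m) ℝ) (hX : X.PosSemidef) (htr : X.trace = 1)
    (haXa : ρ < a ⬝ᵥ X.mulVec a)
    (hH : (CFC.sqrt X * (vecMulVec a a - ρ • (1 : Matrix (Fin m) (Fin m) ℝ)) *
      CFC.sqrt X).IsHermitian) :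
    ∃ i₀ : Fin m, 0 < hH.eigenvalues i₀ ∧ (∀ j, j ≠ i₀ → hH.eigenvalues j ≤ 0) ∧
      hH.eigenvalues i₀ ≤ a ⬝ᵥ X.mulVec a ∧
      (∑ j ∈ Finset.univ.erase i₀, |hH.eigenvalues j|) =
        hH.eigenvalues i₀ - (a ⬝ᵥ X.mulVec a - ρ) ∧
      hH.eigenvalues i₀ - (a ⬝ᵥ X.mulVec a - ρ) ≤ ρ := by
  classical
  have hS : (CFC.sqrt X).IsHermitian := (Matrix.nonneg_iff_posSemidef.mp (CFC.sqrt_nonneg X)).1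
  have hST : (CFC.sqrt X)ᵀ = CFC.sqrt X := by
    ext i j
    simpa using congrFun (congrFun hS.eq i) j
  set S := CFC.sqrt X with hSdef
  set M := S * (vecMulVec a a - ρ • (1 : Matrix (Fin m) (Fin m) ℝ)) * S with hMdef
  have hflip : ∀ v x : Fin m → ℝ, v ⬝ᵥ (S *ᵥ x) = (S *ᵥ v) ⬝ᵥ x := by
    intro v x
    rw [Matrix.dotProduct_mulVec, ← Matrix.mulVec_transpose, hST]
  have hXv : ∀ v : Fin m → ℝ, X *ᵥ v = S *ᵥ (S *ᵥ v) := by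
    intro v; rw [Matrix.mulVec_mulVec, CFC.sqrt_mul_sqrt_self X hX.nonneg]
  have hvmv : ∀ w : Fin m → ℝ, (vecMulVec a a) *ᵥ w = (a ⬝ᵥ w) • a := by
    intro w; ext i
    simp only [mulVec, dotProduct, vecMulVec_apply, Pi.smul_apply, smul_eq_mul,
      Finset.sum_mul]
    exact Finset.sum_congr rfl fun x _ => by ring
  set b := S *ᵥ a with hb
  have hdp : ∀ w : Fin m → ℝ, 0 ≤ w ⬝ᵥ w :=
    fun w => Finset.sum_nonneg fun i _ => mul_self_nonneg (w i)
  have hquad : ∀ v : Fin m → ℝ,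
      v ⬝ᵥ (M *ᵥ v) = (b ⬝ᵥ v) ^ 2 - ρ * ((S *ᵥ v) ⬝ᵥ (S *ᵥ v)) := by
    intro v
    have h1 : M *ᵥ v = S *ᵥ ((vecMulVec a a - ρ • (1 : Matrix (Fin m) (Fin m) ℝ)) *ᵥ (S *ᵥ v)) := by
      rw [hMdef, ← Matrix.mulVec_mulVec, ← Matrix.mulVec_mulVec]
    rw [h1, hflip, Matrix.sub_mulVec, hvmv, Matrix.smul_mulVec, Matrix.one_mulVec]
    have h2 : a ⬝ᵥ (S *ᵥ v) = b ⬝ᵥ v := hflip a v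
    rw [dotProduct_sub, dotProduct_smul, dotProduct_smul, dotProduct_comm (S *ᵥ v) a, h2]
    simp only [smul_eq_mul]
    ring
  have haXa' : a ⬝ᵥ X *ᵥ a = b ⬝ᵥ b := by rw [hXv, hflip]
  have hud : ∀ i j, (⇑(hH.eigenvectorBasis i) : Fin m → ℝ) ⬝ᵥ ⇑(hH.eigenvectorBasis j)
      = if i = j then 1 else 0 := by
    intro i j
    have h := hH.eigenvectorBasis.orthonormal
    rw [orthonormal_iff_ite] at h
    simpa [PiLp.inner_apply, RCLike.inner_apply, dotProduct, mul_comm] using h i j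
  have hMu : ∀ i, M *ᵥ ⇑(hH.eigenvectorBasis i) = hH.eigenvalues i • ⇑(hH.eigenvectorBasis i) :=
    fun i => hH.mulVec_eigenvectorBasis i
  have heig : ∀ i, hH.eigenvalues i
      = (b ⬝ᵥ ⇑(hH.eigenvectorBasis i)) ^ 2
        - ρ * ((S *ᵥ ⇑(hH.eigenvectorBasis i)) ⬝ᵥ (S *ᵥ ⇑(hH.eigenvectorBasis i))) := by
    intro i
    have h1 : (⇑(hH.eigenvectorBasis i) : Fin m → ℝ) ⬝ᵥ (M *ᵥ ⇑(hH.eigenvectorBasis i))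
        = hH.eigenvalues i := by
      rw [hMu, dotProduct_smul, hud, if_pos rfl]
      simp
    rw [← h1, hquad]
  have hcomb : ∀ i j, i ≠ j → ∀ c d : ℝ,
      (c • ⇑(hH.eigenvectorBasis i) + d • ⇑(hH.eigenvectorBasis j)) ⬝ᵥ
        (M *ᵥ (c • ⇑(hH.eigenvectorBasis i) + d • ⇑(hH.eigenvectorBasis j)))
      = c ^ 2 * hH.eigenvalues i + d ^ 2 * hH.eigenvalues j := by
    intro i j hij c d
    rw [Matrix.mulVec_add, Matrix.mulVec_smul, Matrix.mulVec_smul, hMu, hMu]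
    simp only [dotProduct_add, add_dotProduct, dotProduct_smul, smul_dotProduct,
      smul_eq_mul, hud, if_neg hij, if_neg (Ne.symm hij), smul_smul]
    norm_num
    ring
  have htrM : M.trace = a ⬝ᵥ X *ᵥ a - ρ := by
    have h1 : M.trace = ((S * S) * (vecMulVec a a - ρ • (1 : Matrix (Fin m) (Fin m) ℝ))).trace := by
      rw [hMdef, Matrix.trace_mul_cycle]
    have h2 : (X * vecMulVec a a).trace = a ⬝ᵥ X *ᵥ a := by
      simp only [Matrix.trace, Matrix.diag, Matrix.mul_apply, vecMulVec_apply, dotProduct, mulVec]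
      apply Finset.sum_congr rfl
      intro i _
      rw [Finset.mul_sum]
      apply Finset.sum_congr rfl
      intro j _
      ring
    rw [h1, CFC.sqrt_mul_sqrt_self X hX.nonneg, Matrix.mul_sub, Matrix.trace_sub, h2]
    rw [Matrix.mul_smul, Matrix.mul_one, Matrix.trace_smul, htr]
    simp
  have hsum : ∑ i, hH.eigenvalues i = M.trace := by
    conv_rhs => rw [hH.spectral_theorem, Unitary.conjStarAlgAut_apply]
    rw [Matrix.trace_mul_cycle]
    rw [show (star (hH.eigenvectorUnitary : Matrix (Fin m) (Fin m) ℝ)) *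
        (hH.eigenvectorUnitary : Matrix (Fin m) (Fin m) ℝ) = 1 from
      Matrix.UnitaryGroup.star_mul_self _, one_mul]
    simp [Matrix.trace_diagonal]
  haveI hne : Nonempty (Fin m) := by
    rcases Nat.eq_zero_or_pos m with h | h
    · subst h
      simp at hρ1
      linarith
    · exact ⟨⟨0, h⟩⟩
  obtain ⟨i₀, -, hmax⟩ := Finset.exists_max_image Finset.univ hH.eigenvalues Finset.univ_nonempty
  have hα : 0 < hH.eigenvalues i₀ := by
    by_contra h
    push_neg at h
    have hs : ∑ i, hH.eigenvalues i ≤ 0 :=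
      Finset.sum_nonpos fun i _ => le_trans (hmax i (Finset.mem_univ i)) h
    rw [hsum, htrM] at hs
    linarith
  have hd : b ⬝ᵥ ⇑(hH.eigenvectorBasis i₀) ≠ 0 := by
    intro h
    have h1 := heig i₀
    rw [h] at h1
    have h2 := hdp (S *ᵥ ⇑(hH.eigenvectorBasis i₀))
    nlinarith
  have hneg : ∀ j, j ≠ i₀ → hH.eigenvalues j ≤ 0 := by
    intro j hj
    set c : ℝ := b ⬝ᵥ ⇑(hH.eigenvectorBasis j) with hc
    set d : ℝ := b ⬝ᵥ ⇑(hH.eigenvectorBasis i₀) with hdd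
    have hcomb' := hcomb i₀ j (Ne.symm hj) c (-d)
    have hquad' := hquad (c • ⇑(hH.eigenvectorBasis i₀) + (-d) • ⇑(hH.eigenvectorBasis j))
    have hbv : b ⬝ᵥ (c • ⇑(hH.eigenvectorBasis i₀) + (-d) • ⇑(hH.eigenvectorBasis j)) = 0 := by
      rw [dotProduct_add, dotProduct_smul, dotProduct_smul, ← hc, ← hdd]
      simp [smul_eq_mul]
      ring
    rw [hbv, hcomb'] at hquad'
    have h0 := hdp (S *ᵥ (c • ⇑(hH.eigenvectorBasis i₀) + (-d) • ⇑(hH.eigenvectorBasis j)))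
    have hd2 : 0 < d ^ 2 := by
      have h := sq_abs d
      have := abs_pos.mpr hd
      nlinarith
    by_contra hp
    push_neg at hp
    nlinarith [mul_pos hd2 hp, mul_nonneg (sq_nonneg c) hα.le, mul_nonneg hρ0.le h0]
  have hu1 : (⇑(hH.eigenvectorBasis i₀) : Fin m → ℝ) ⬝ᵥ ⇑(hH.eigenvectorBasis i₀) = 1 := by
    rw [hud]; simp
  have hαle : hH.eigenvalues i₀ ≤ a ⬝ᵥ X *ᵥ a := by
    have h1 := heig i₀
    have hcs : (b ⬝ᵥ ⇑(hH.eigenvectorBasis i₀)) ^ 2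
        ≤ (b ⬝ᵥ b) * ((⇑(hH.eigenvectorBasis i₀) : Fin m → ℝ) ⬝ᵥ ⇑(hH.eigenvectorBasis i₀)) := by
      have h := Finset.sum_mul_sq_le_sq_mul_sq Finset.univ b ⇑(hH.eigenvectorBasis i₀)
      simpa [dotProduct, pow_two] using h
    rw [hu1, mul_one] at hcs
    have h2 := hdp (S *ᵥ ⇑(hH.eigenvectorBasis i₀))
    rw [haXa']
    nlinarith [mul_nonneg hρ0.le h2]
  have hsumabs : (∑ j ∈ Finset.univ.erase i₀, |hH.eigenvalues j|)
      = hH.eigenvalues i₀ - (a ⬝ᵥ X *ᵥ a - ρ) := by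
    have h1 : (∑ j ∈ Finset.univ.erase i₀, |hH.eigenvalues j|)
        = ∑ j ∈ Finset.univ.erase i₀, (-(hH.eigenvalues j)) :=
      Finset.sum_congr rfl fun j hj => abs_of_nonpos (hneg j (Finset.ne_of_mem_erase hj))
    rw [h1, Finset.sum_neg_distrib, Finset.sum_erase_eq_sub (Finset.mem_univ i₀), hsum, htrM]
    ring
  exact ⟨i₀, hα, hneg, hαle, hsumabs, by linarith⟩
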